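/- (Strict matrix S-lemma.) Let M, N ∈ S^{q+r}. If there exists a real α ≥ 0 such that M − αN is positive definite, then Z_r(N) ⊆ Z_r⁺(M). Conversely, if in addition N ∈ Π_{q,r} and N₂₂ is negative definite, then Z_r(N) ⊆ Z_r⁺(M) if and only if there exists a real α ≥ 0 such that M − αN is positive definite. -/

import Mathlib

open Matrix
open scoped Classical

/-- The Moore–Penrose pseudoinverse of a real matrix, defined via its four
characterizing Penrose conditions (which determine it uniquely). -/
noncomputable def pinv {m n : ℕ} (A : Matrix (Fin m) (Fin n) ℝ) : Matrix (Fin n) (Fin m) ℝ :=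
  if h : ∃ B : Matrix (Fin n) (Fin m) ℝ,
      A * B * A = A ∧ B * A * B = B ∧ (A * B)ᵀ = A * B ∧ (B * A)ᵀ = B * A
  then h.choose else 0

/-- The unique positive semidefinite square root of a positive semidefinite matrix
(defined by its characterizing property, which determines it uniquely). -/
noncomputable def msqrt {n : ℕ} (A : Matrix (Fin n) (Fin n) ℝ) : Matrix (Fin n) (Fin n) ℝ :=
  if h : ∃ B : Matrix (Fin n) (Fin n) ℝ, B.PosSemidef ∧ B * B = A then h.choose else 0

/-- The quadratic matrix expression `[I; Z]ᵀ Π [I; Z]`. -/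
noncomputable def qmi {q r : ℕ} (P : Matrix (Fin q ⊕ Fin r) (Fin q ⊕ Fin r) ℝ)
    (Z : Matrix (Fin r) (Fin q) ℝ) : Matrix (Fin q) (Fin q) ℝ :=
  (fromRows (1 : Matrix (Fin q) (Fin q) ℝ) Z)ᵀ * P * fromRows 1 Z

/-- The solution set `Z_r(Π)` of the nonstrict QMI. -/
def ZrSet {q r : ℕ} (P : Matrix (Fin q ⊕ Fin r) (Fin q ⊕ Fin r) ℝ) :
    Set (Matrix (Fin r) (Fin q) ℝ) := {Z | (qmi P Z).PosSemidef}

/-- The solution set `Z_r⁺(Π)` of the strict QMI. -/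
def ZrPlusSet {q r : ℕ} (P : Matrix (Fin q ⊕ Fin r) (Fin q ⊕ Fin r) ℝ) :
    Set (Matrix (Fin r) (Fin q) ℝ) := {Z | (qmi P Z).PosDef}

/-- The solution set `Z_r⁰(Π)` of the quadratic matrix equality. -/
def ZrZeroSet {q r : ℕ} (P : Matrix (Fin q ⊕ Fin r) (Fin q ⊕ Fin r) ℝ) :
    Set (Matrix (Fin r) (Fin q) ℝ) := {Z | qmi P Z = 0}

/-- Generalized Schur complement `Π|Π₂₂ = Π₁₁ − Π₁₂ Π₂₂^† Π₂₁`. -/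
noncomputable def schurC {q r : ℕ} (P : Matrix (Fin q ⊕ Fin r) (Fin q ⊕ Fin r) ℝ) :
    Matrix (Fin q) (Fin q) ℝ :=
  P.toBlocks₁₁ - P.toBlocks₁₂ * pinv P.toBlocks₂₂ * P.toBlocks₂₁

/-- Membership in the class `Π_{q,r}`: symmetric, `Π₂₂ ⪯ 0`, `Π|Π₂₂ ⪰ 0`,
and `ker Π₂₂ ⊆ ker Π₁₂`. -/
def memPi {q r : ℕ} (P : Matrix (Fin q ⊕ Fin r) (Fin q ⊕ Fin r) ℝ) : Prop :=
  P.IsSymm ∧ (-P.toBlocks₂₂).PosSemidef ∧ (schurC P).PosSemidef ∧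
    ∀ x : Fin r → ℝ, P.toBlocks₂₂ *ᵥ x = 0 → P.toBlocks₁₂ *ᵥ x = 0


section AuxSLemma
set_option linter.unusedSectionVars false

lemma penrose_unique {m n : ℕ} (A : Matrix (Fin m) (Fin n) ℝ) (B C : Matrix (Fin n) (Fin m) ℝ)
    (hB : A * B * A = A ∧ B * A * B = B ∧ (A * B)ᵀ = A * B ∧ (B * A)ᵀ = B * A)
    (hC : A * C * A = A ∧ C * A * C = C ∧ (A * C)ᵀ = A * C ∧ (C * A)ᵀ = C * A) :
    B = C := by
  obtain ⟨hB1, hB2, hB3, hB4⟩ := hB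
  obtain ⟨hC1, hC2, hC3, hC4⟩ := hC
  have e2 : Aᵀ = Aᵀ * (Cᵀ * Aᵀ) := by
    conv_lhs => rw [← hC1]
    simp [transpose_mul, Matrix.mul_assoc]
  have hAB : A * B = A * C := by
    calc A * B = Bᵀ * Aᵀ := by rw [← transpose_mul]; exact hB3.symm
    _ = Bᵀ * (Aᵀ * (Cᵀ * Aᵀ)) := by rw [← e2]
    _ = (Bᵀ * Aᵀ) * (Cᵀ * Aᵀ) := by rw [Matrix.mul_assoc]
    _ = (A * B) * (A * C) := by rw [← transpose_mul, ← transpose_mul, hB3, hC3]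
    _ = A * B * A * C := (Matrix.mul_assoc _ _ _).symm
    _ = A * C := by rw [hB1]
  have hBA : B * A = C * A := by
    calc B * A = Aᵀ * Bᵀ := by rw [← transpose_mul]; exact hB4.symm
    _ = (Aᵀ * (Cᵀ * Aᵀ)) * Bᵀ := by rw [← e2]
    _ = (Aᵀ * Cᵀ) * (Aᵀ * Bᵀ) := by rw [Matrix.mul_assoc, Matrix.mul_assoc, Matrix.mul_assoc]
    _ = (C * A)ᵀ * (B * A)ᵀ := by rw [← transpose_mul, ← transpose_mul]
    _ = (C * A) * (B * A) := by rw [hB4, hC4]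
    _ = C * (A * B * A) := by rw [Matrix.mul_assoc, Matrix.mul_assoc]
    _ = C * A := by rw [hB1]
  calc B = B * A * B := hB2.symm
  _ = C * A * B := by rw [hBA]
  _ = C * (A * B) := by rw [Matrix.mul_assoc]
  _ = C * (A * C) := by rw [hAB]
  _ = C * A * C := by rw [Matrix.mul_assoc]
  _ = C := hC2

lemma pinv_of_invertible {n : ℕ} (A : Matrix (Fin n) (Fin n) ℝ) (h : IsUnit A.det) :
    pinv A = A⁻¹ := by
  have h1 : A * A⁻¹ = 1 := mul_nonsing_inv A h
  have h2 : A⁻¹ * A = 1 := nonsing_inv_mul A h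
  have spec : A * A⁻¹ * A = A ∧ A⁻¹ * A * A⁻¹ = A⁻¹ ∧ (A * A⁻¹)ᵀ = A * A⁻¹ ∧
      (A⁻¹ * A)ᵀ = A⁻¹ * A := by
    refine ⟨by rw [h1, Matrix.one_mul], by rw [h2, Matrix.one_mul], ?_, ?_⟩ <;>
      simp [h1, h2]
  have hex : ∃ B : Matrix (Fin n) (Fin n) ℝ,
      A * B * A = A ∧ B * A * B = B ∧ (A * B)ᵀ = A * B ∧ (B * A)ᵀ = B * A := ⟨A⁻¹, spec⟩
  rw [pinv, dif_pos hex]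
  exact penrose_unique A _ _ hex.choose_spec spec

/-- Core 2-variable existence lemma for Dines' theorem. -/
lemma exists_xy (β δ a b : ℝ) (ha : 0 < a) (hb : 0 ≤ b) (hab : a + b = 1) :
    ∃ x y : ℝ, x^2 + 2*x*y*β = a ∧ y^2 + 2*x*y*δ = b := by
  obtain ⟨d, hd⟩ : ∃ d : ℝ, d = a - 1/2 := ⟨_, rfl⟩
  obtain ⟨μ, hμ⟩ : ∃ μ : ℝ, μ = b*β - a*δ := ⟨_, rfl⟩
  obtain ⟨ν, hν⟩ : ∃ ν : ℝ, ν = β + δ := ⟨_, rfl⟩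
  have hd2 : 4*d^2 ≤ 1 := by nlinarith [mul_nonneg ha.le hb]
  have hDnn : (0:ℝ) ≤ 4*μ^2 + 1 - 4*d^2 := by nlinarith [sq_nonneg μ]
  obtain ⟨e, he⟩ : ∃ e : ℝ, e = Real.sqrt (4*μ^2 + 1 - 4*d^2) := ⟨_, rfl⟩
  have he0 : 0 ≤ e := he ▸ Real.sqrt_nonneg _
  have he2 : e^2 = 4*μ^2 + 1 - 4*d^2 := by rw [he]; exact Real.sq_sqrt hDnn
  obtain ⟨ς, hς⟩ : ∃ ς : ℝ, ς = if 0 ≤ ν then 1 else -1 := ⟨_, rfl⟩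
  have hς2 : ς^2 = 1 := by rcases le_or_gt 0 ν with h | h <;> simp [hς, h, not_le.mpr]
  have hden : (0:ℝ) < 4*μ^2 + 1 := by positivity
  obtain ⟨s, hs⟩ : ∃ s : ℝ, s = (4*d*μ + ς*e)/(4*μ^2+1) := ⟨_, rfl⟩
  have hts : (4*μ^2+1)*s = 4*d*μ + ς*e := by
    rw [hs]; field_simp
  have habs : (4*d*μ)^2 ≤ e^2 := by nlinarith [sq_nonneg μ, sq_nonneg d, hd2]
  have hνs : 0 ≤ ν * s := by
    rcases le_or_gt 0 ν with h | h
    · have hς1 : ς = 1 := by simp [hς, h]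
      have h1 : 0 ≤ 4*d*μ + ς*e := by
        rw [hς1, one_mul]; nlinarith [habs, he0]
      rw [hs]; exact mul_nonneg h (div_nonneg h1 hden.le)
    · have hς1 : ς = -1 := by simp [hς, not_le.mpr h]
      have h1 : 4*d*μ + ς*e ≤ 0 := by
        rw [hς1]; nlinarith [habs, he0]
      have h2 : s ≤ 0 := by
        rw [hs]; exact div_nonpos_of_nonpos_of_nonneg h1 hden.le
      nlinarith
  obtain ⟨c, hc⟩ : ∃ c : ℝ, c = 2*(d - μ*s) := ⟨_, rfl⟩
  have key : (4*μ^2+1)*(c^2+s^2-1) = 0 := by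
    subst hc
    linear_combination ((4*μ^2+1)*s + 4*d*μ + ς*e - 8*d*μ) * hts + e^2 * hς2 + he2
  have hcs : c^2 + s^2 = 1 := by
    have := mul_eq_zero.mp key
    rcases this with h | h
    · exact absurd h hden.ne'
    · linarith
  obtain ⟨S, hS⟩ : ∃ S : ℝ, S = 1 + ν*s := ⟨_, rfl⟩
  have hS1 : 1 ≤ S := by rw [hS]; linarith [hνs]
  have hSpos : 0 < S := by linarith
  have hS0 : S ≠ 0 := hSpos.ne'
  have hc1 : (0:ℝ) ≤ (1+c)/2 := by linarith [sq_nonneg (1+c), sq_nonneg s, hcs]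
  have hc1' : (0:ℝ) ≤ (1-c)/2 := by linarith [sq_nonneg (1-c), sq_nonneg s, hcs]
  have hSinv : (0:ℝ) ≤ 1/S := by positivity
  obtain ⟨τ, hτ⟩ : ∃ τ : ℝ, τ = if 0 ≤ s then 1 else -1 := ⟨_, rfl⟩
  have hτ2 : τ^2 = 1 := by rcases le_or_gt 0 s with h | h <;> simp [hτ, h, not_le.mpr]
  have hτs : τ * |s| = s := by
    rcases le_or_gt 0 s with h | h
    · simp [hτ, h, abs_of_nonneg h]
    · simp [hτ, not_le.mpr h, abs_of_neg h]
  obtain ⟨x, hx⟩ : ∃ x : ℝ, x = Real.sqrt (1/S) * Real.sqrt ((1+c)/2) := ⟨_, rfl⟩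
  obtain ⟨y, hy⟩ : ∃ y : ℝ, y = τ * (Real.sqrt (1/S) * Real.sqrt ((1-c)/2)) := ⟨_, rfl⟩
  have hx2 : x^2 = (1/S)*((1+c)/2) := by
    rw [hx, mul_pow, Real.sq_sqrt hSinv, Real.sq_sqrt hc1]
  have hy2 : y^2 = (1/S)*((1-c)/2) := by
    rw [hy, mul_pow, hτ2, one_mul, mul_pow, Real.sq_sqrt hSinv, Real.sq_sqrt hc1']
  have hxy : 2*x*y = (1/S)*s := by
    have h1 : Real.sqrt ((1+c)/2) * Real.sqrt ((1-c)/2) = |s|/2 := by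
      rw [← Real.sqrt_mul hc1]
      have : (1+c)/2 * ((1-c)/2) = (s/2)^2 := by linear_combination (-1/4 : ℝ)*hcs
      rw [this, Real.sqrt_sq_eq_abs, abs_div]
      norm_num
    have h2 : Real.sqrt (1/S) * Real.sqrt (1/S) = 1/S := Real.mul_self_sqrt hSinv
    calc 2*x*y = 2 * (Real.sqrt (1/S) * Real.sqrt (1/S)) *
          (Real.sqrt ((1+c)/2) * Real.sqrt ((1-c)/2)) * τ := by rw [hx, hy]; ring
      _ = 2 * (1/S) * (|s|/2) * τ := by rw [h1, h2]
      _ = (1/S) * (τ * |s|) := by ring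
      _ = (1/S)*s := by rw [hτs]
  have hgA : (1+c)/2 + s*β = a*S := by
    linear_combination (1/2)*hc + hd + (-a)*hS + (-s)*hμ + (-(a*s))*hν + (-(s*β))*hab
  have hgB : (1-c)/2 + s*δ = b*S := by
    linear_combination (-(1:ℝ)/2)*hc + (-1)*hd + (-b)*hS + s*hμ + (-(b*s))*hν + (-(1+s*δ))*hab
  refine ⟨x, y, ?_, ?_⟩
  · have : x^2 + 2*x*y*β = (1/S)*((1+c)/2 + s*β) := by rw [hx2, hxy]; ring
    rw [this, hgA]; field_simp
  · have : y^2 + 2*x*y*δ = (1/S)*((1-c)/2 + s*δ) := by rw [hy2, hxy]; ring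
    rw [this, hgB]; field_simp

/-- Scalar dispatch for Dines. -/
lemma dines_scalar (pA pB qA qB gA gB a b : ℝ) (ha : 0 ≤ a) (hb : 0 ≤ b) (hab : a + b = 1) :
    ∃ x y : ℝ, x^2*pA + 2*x*y*gA + y^2*qA = a*pA + b*qA ∧
      x^2*pB + 2*x*y*gB + y^2*qB = a*pB + b*qB := by
  rcases eq_or_lt_of_le ha with ha0 | hapos
  · -- a = 0
    refine ⟨0, 1, ?_, ?_⟩ <;> · rw [← ha0] at hab ⊢; rw [zero_add] at hab; rw [hab]; ring
  rcases eq_or_ne (pA, pB) (0, 0) with hp0 | hp0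
  · -- p = 0
    obtain ⟨h1, h2⟩ : pA = 0 ∧ pB = 0 := by simpa [Prod.ext_iff] using hp0
    refine ⟨0, Real.sqrt b, ?_, ?_⟩ <;>
      simp [h1, h2, Real.sq_sqrt hb]
  rcases eq_or_ne (pA*qB - pB*qA) 0 with hΔ | hΔ
  · -- degenerate: q = c • p
    have hpne : pA ≠ 0 ∨ pB ≠ 0 := by
      by_contra h
      push_neg at h
      exact hp0 (by simp [Prod.ext_iff, h.1, h.2])
    obtain ⟨cc, hc1, hc2⟩ : ∃ cc : ℝ, qA = cc*pA ∧ qB = cc*pB := by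
      rcases eq_or_ne pA 0 with h0 | h0
      · have hpB : pB ≠ 0 := by
          rcases hpne with h | h
          · exact absurd h0 h
          · exact h
        refine ⟨qB/pB, ?_, by field_simp⟩
        have : pB * qA = 0 := by rw [h0] at hΔ; linarith [hΔ]
        have hqA : qA = 0 := by
          rcases mul_eq_zero.mp this with h | h
          · exact absurd h hpB
          · exact h
        rw [hqA, h0, mul_zero]
      · refine ⟨qA/pA, by field_simp, ?_⟩
        field_simp
        linear_combination hΔ
    set m := a + b*cc with hm
    rcases le_or_gt 0 m with hm0 | hm0
    · refine ⟨Real.sqrt m, 0, ?_, ?_⟩ <;>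
        · rw [Real.sq_sqrt hm0]; simp only [hc1, hc2, hm]; ring
    · have hcc : cc < 0 := by
        rcases le_or_gt 0 cc with h | h
        · nlinarith
        · exact h
      have hmc : 0 ≤ m/cc := by
        rw [← neg_div_neg_eq]; exact div_nonneg (by linarith) (by linarith)
      have hccne : cc ≠ 0 := ne_of_lt hcc
      refine ⟨0, Real.sqrt (m/cc), ?_, ?_⟩ <;>
        · rw [Real.sq_sqrt hmc]
          simp only [hc1, hc2, hm]
          field_simp
          ring
  · -- independent case
    obtain ⟨β, hβ⟩ : ∃ β : ℝ, β = (gA*qB - gB*qA)/(pA*qB - pB*qA) := ⟨_, rfl⟩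
    obtain ⟨δ, hδ⟩ : ∃ δ : ℝ, δ = (pA*gB - pB*gA)/(pA*qB - pB*qA) := ⟨_, rfl⟩
    have hgA : gA = β*pA + δ*qA := by rw [hβ, hδ, div_mul_eq_mul_div, div_mul_eq_mul_div, ← add_div, eq_div_iff hΔ]; ring
    have hgB : gB = β*pB + δ*qB := by rw [hβ, hδ, div_mul_eq_mul_div, div_mul_eq_mul_div, ← add_div, eq_div_iff hΔ]; ring
    obtain ⟨x, y, h1, h2⟩ := exists_xy β δ a b hapos hb hab
    refine ⟨x, y, ?_, ?_⟩
    · rw [hgA]; linear_combination pA * h1 + qA * h2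
    · rw [hgB]; linear_combination pB * h1 + qB * h2

variable {n : Type*} [Fintype n]

lemma dot_transpose_mulVec' (A : Matrix n n ℝ) (x y : n → ℝ) :
    x ⬝ᵥ (Aᵀ *ᵥ y) = (A *ᵥ x) ⬝ᵥ y := by
  rw [dotProduct_mulVec, vecMul_transpose]

lemma qf_sym (A : Matrix n n ℝ) (hA : Aᵀ = A) (x y : n → ℝ) :
    y ⬝ᵥ (A *ᵥ x) = x ⬝ᵥ (A *ᵥ y) := by
  conv_lhs => rw [← hA]
  rw [dot_transpose_mulVec', dotProduct_comm]

lemma qf_expand (A : Matrix n n ℝ) (hA : Aᵀ = A) (u v : n → ℝ) (x y : ℝ) :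
    (x • u + y • v) ⬝ᵥ (A *ᵥ (x • u + y • v)) =
      x^2 * (u ⬝ᵥ (A *ᵥ u)) + 2*x*y * (u ⬝ᵥ (A *ᵥ v)) + y^2 * (v ⬝ᵥ (A *ᵥ v)) := by
  have hc := qf_sym A hA u v
  simp only [mulVec_add, mulVec_smul, dotProduct_add, add_dotProduct, dotProduct_smul,
    smul_dotProduct, smul_eq_mul]
  linear_combination (x*y) * hc

/-- Dines' theorem: the joint range of two real symmetric quadratic forms is convex. -/
theorem dines (A B : Matrix n n ℝ) (hA : Aᵀ = A) (hB : Bᵀ = B) :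
    Convex ℝ {p : ℝ × ℝ | ∃ v : n → ℝ, p = (v ⬝ᵥ (A *ᵥ v), v ⬝ᵥ (B *ᵥ v))} := by
  rintro p ⟨u, hu⟩ q ⟨v, hv⟩ a b ha hb hab
  obtain ⟨x, y, h1, h2⟩ := dines_scalar (u ⬝ᵥ (A *ᵥ u)) (u ⬝ᵥ (B *ᵥ u)) (v ⬝ᵥ (A *ᵥ v))
    (v ⬝ᵥ (B *ᵥ v)) (u ⬝ᵥ (A *ᵥ v)) (u ⬝ᵥ (B *ᵥ v)) a b ha hb hab
  refine ⟨x • u + y • v, ?_⟩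
  rw [hu, hv]
  apply Prod.ext
  · simp only [Prod.fst_add, Prod.smul_fst, smul_eq_mul]
    rw [qf_expand A hA u v x y, h1]
  · simp only [Prod.snd_add, Prod.smul_snd, smul_eq_mul]
    rw [qf_expand B hB u v x y, h2]

/-- Strict S-lemma via separation, given pointwise positivity on the strict cone. -/
lemma slemma_sep {n : Type*} [Fintype n] (A N : Matrix n n ℝ) (hA : Aᵀ = A) (hN : Nᵀ = N)
    (hpos : ∀ v : n → ℝ, 0 < v ⬝ᵥ (N *ᵥ v) → 0 < v ⬝ᵥ (A *ᵥ v))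
    (hslater : ∃ v : n → ℝ, 0 < v ⬝ᵥ (N *ᵥ v)) :
    ∃ α : ℝ, 0 ≤ α ∧ ∀ v : n → ℝ, 0 ≤ v ⬝ᵥ (A *ᵥ v) - α * (v ⬝ᵥ (N *ᵥ v)) := by
  set W : Set (ℝ × ℝ) := {p : ℝ × ℝ | ∃ v : n → ℝ, p = (v ⬝ᵥ (A *ᵥ v), v ⬝ᵥ (N *ᵥ v))}
    with hW
  set U : Set (ℝ × ℝ) := {p : ℝ × ℝ | p.1 < 0 ∧ 0 < p.2} with hU
  have hUconv : Convex ℝ U := by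
    have h1 : Convex ℝ {p : ℝ × ℝ | p.1 < 0} := convex_halfSpace_lt (LinearMap.fst ℝ ℝ ℝ).isLinear 0
    have h2 : Convex ℝ {p : ℝ × ℝ | 0 < p.2} := convex_halfSpace_gt (LinearMap.snd ℝ ℝ ℝ).isLinear 0
    exact h1.inter h2
  have hUopen : IsOpen U := by
    have h1 : IsOpen {p : ℝ × ℝ | p.1 < 0} := isOpen_lt continuous_fst continuous_const
    have h2 : IsOpen {p : ℝ × ℝ | 0 < p.2} := isOpen_lt continuous_const continuous_snd
    exact h1.inter h2
  have hdisj : Disjoint U W := by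
    rw [Set.disjoint_left]
    rintro p ⟨h1, h2⟩ ⟨v, hv⟩
    rw [hv] at h1 h2
    exact absurd (hpos v h2) (not_lt.mpr h1.le)
  obtain ⟨f, u, hfU, hfW⟩ := geometric_hahn_banach_open hUconv hUopen (dines A N hA hN) hdisj
  set κ₁ : ℝ := f (1, 0) with hκ₁def
  set κ₂ : ℝ := f (0, 1) with hκ₂def
  have frepr : ∀ p : ℝ × ℝ, f p = p.1 * κ₁ + p.2 * κ₂ := by
    intro p
    have h : f p = f (p.1 • ((1:ℝ), (0:ℝ))) + f (p.2 • ((0:ℝ), (1:ℝ))) := by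
      rw [← map_add]
      congr 1
      simp [Prod.ext_iff]
    rw [h, _root_.map_smul, _root_.map_smul, smul_eq_mul, smul_eq_mul]
  have hUlt : ∀ x y : ℝ, x < 0 → 0 < y → x*κ₁ + y*κ₂ < u := by
    intro x y hx hy
    have : (x, y) ∈ U := ⟨hx, hy⟩
    have := hfU _ this
    rwa [frepr] at this
  have hu0 : u ≤ 0 := by
    have h0W : ((0:ℝ), (0:ℝ)) ∈ W := ⟨0, by simp⟩
    have := hfW _ h0W
    rwa [frepr, zero_mul, zero_mul, add_zero] at this
  have h0u : 0 ≤ u := by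
    by_contra h
    push_neg at h
    rcases le_or_gt 0 (κ₂ - κ₁) with hk | hk
    · have := hUlt (-1) 1 (by norm_num) one_pos
      linarith
    · have hε : 0 < u/(2*(κ₂ - κ₁)) := div_pos_of_neg_of_neg h (by linarith)
      have := hUlt (-(u/(2*(κ₂ - κ₁)))) (u/(2*(κ₂ - κ₁))) (by linarith) hε
      have hne : κ₂ - κ₁ ≠ 0 := ne_of_lt hk
      have heq : -(u/(2*(κ₂ - κ₁)))*κ₁ + (u/(2*(κ₂ - κ₁)))*κ₂ = u/2 := by
        field_simp
        ring
      rw [heq] at this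
      linarith
  have hu : u = 0 := le_antisymm hu0 h0u
  rw [hu] at hUlt hfW
  have hκ₁nn : 0 ≤ κ₁ := by
    by_contra h
    push_neg at h
    rcases le_or_gt 0 κ₂ with hk | hk
    · have := hUlt (-1) 1 (by norm_num) one_pos
      linarith
    · have hy : 0 < κ₁/(2*κ₂) := div_pos_of_neg_of_neg h (by linarith)
      have := hUlt (-1) (κ₁/(2*κ₂)) (by norm_num) hy
      have hne : κ₂ ≠ 0 := ne_of_lt hk
      have heq : (-1)*κ₁ + (κ₁/(2*κ₂))*κ₂ = -κ₁/2 := by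
        field_simp
        ring
      rw [heq] at this
      linarith
  have hκ₂np : κ₂ ≤ 0 := by
    by_contra h
    push_neg at h
    rcases eq_or_lt_of_le hκ₁nn with h1 | h1
    · have := hUlt (-1) 1 (by norm_num) one_pos
      rw [← h1] at this
      linarith
    · have hx : -(κ₂/(2*κ₁)) < 0 := neg_neg_iff_pos.mpr (div_pos h (by linarith))
      have := hUlt (-(κ₂/(2*κ₁))) 1 hx one_pos
      have hne : κ₁ ≠ 0 := ne_of_gt h1
      have heq : (-(κ₂/(2*κ₁)))*κ₁ + 1*κ₂ = κ₂/2 := by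
        field_simp
        ring
      rw [heq] at this
      linarith
  have hWge : ∀ v : n → ℝ, 0 ≤ (v ⬝ᵥ (A *ᵥ v))*κ₁ + (v ⬝ᵥ (N *ᵥ v))*κ₂ := by
    intro v
    have hvW : ((v ⬝ᵥ (A *ᵥ v)), (v ⬝ᵥ (N *ᵥ v))) ∈ W := ⟨v, rfl⟩
    have := hfW _ hvW
    rwa [frepr] at this
  have hκ₁pos : 0 < κ₁ := by
    rcases eq_or_lt_of_le hκ₁nn with h1 | h1
    · exfalso
      have hκ₂neg : κ₂ < 0 := by
        rcases eq_or_lt_of_le hκ₂np with h2 | h2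
        · exfalso
          have := hUlt (-1) 1 (by norm_num) one_pos
          rw [← h1, ← h2] at this
          linarith
        · exact h2
      obtain ⟨v, hv⟩ := hslater
      have := hWge v
      rw [← h1] at this
      nlinarith
    · exact h1
  refine ⟨-κ₂/κ₁, div_nonneg (neg_nonneg.mpr hκ₂np) hκ₁pos.le, fun v => ?_⟩
  have := hWge v
  have h2 : v ⬝ᵥ (A *ᵥ v) - (-κ₂/κ₁) * (v ⬝ᵥ (N *ᵥ v)) =
      (1/κ₁) * ((v ⬝ᵥ (A *ᵥ v))*κ₁ + (v ⬝ᵥ (N *ᵥ v))*κ₂) := by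
    have hne : κ₁ ≠ 0 := ne_of_gt hκ₁pos
    field_simp
    ring
  rw [h2]
  positivity

variable {n : Type*} [Fintype n]

lemma cont_qf (A : Matrix n n ℝ) : Continuous fun v : n → ℝ => v ⬝ᵥ (A *ᵥ v) := by
  have h : (fun v : n → ℝ => v ⬝ᵥ (A *ᵥ v)) =
      fun v => ∑ i, v i * (∑ j, A i j * v j) := by
    ext v
    simp [dotProduct, mulVec]
  rw [h]
  exact continuous_finset_sum _ fun i _ =>
    (continuous_apply i).mul (continuous_finset_sum _ fun j _ =>
      continuous_const.mul (continuous_apply j))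

lemma dot_self_pos {x : n → ℝ} (hx : x ≠ 0) : 0 < x ⬝ᵥ x := by
  have h1 : 0 ≤ x ⬝ᵥ x := Finset.sum_nonneg fun i _ => mul_self_nonneg (x i)
  rcases eq_or_lt_of_le h1 with h | h
  · exact absurd (dotProduct_self_eq_zero.mp h.symm) hx
  · exact h

lemma posdef_of_sphere (A : Matrix n n ℝ) (hA : A.IsHermitian)
    (h : ∀ v : n → ℝ, v ⬝ᵥ v = 1 → 0 < v ⬝ᵥ (A *ᵥ v)) : A.PosDef := by
  refine Matrix.PosDef.of_dotProduct_mulVec_pos hA (fun x hx => ?_)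
  have ht : 0 < x ⬝ᵥ x := dot_self_pos hx
  set t := x ⬝ᵥ x with htdef
  set c : ℝ := (Real.sqrt t)⁻¹ with hcdef
  have hc2 : c^2 = t⁻¹ := by
    rw [hcdef, ← Real.sqrt_inv, Real.sq_sqrt (by positivity)]
  have hunit : (c • x) ⬝ᵥ (c • x) = 1 := by
    rw [smul_dotProduct, dotProduct_smul, smul_eq_mul, smul_eq_mul, ← mul_assoc, ← pow_two, hc2]
    exact inv_mul_cancel₀ ht.ne'
  have := h (c • x) hunit
  have hq : (c • x) ⬝ᵥ (A *ᵥ (c • x)) = t⁻¹ * (x ⬝ᵥ (A *ᵥ x)) := by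
    rw [smul_dotProduct, mulVec_smul, dotProduct_smul, smul_eq_mul, smul_eq_mul, ← mul_assoc,
      ← pow_two, hc2]
  rw [hq] at this
  have hpos : 0 < x ⬝ᵥ (A *ᵥ x) := by
    by_contra hcon
    push_neg at hcon
    nlinarith [inv_pos.mpr ht]
  simpa using hpos

lemma compact_in_sphere {s : Set (n → ℝ)} (hclosed : IsClosed s)
    (hsub : s ⊆ {v : n → ℝ | v ⬝ᵥ v = 1}) : IsCompact s := by
  apply Metric.isCompact_of_isClosed_isBounded hclosed
  rw [isBounded_iff_forall_norm_le]
  refine ⟨1, fun x hx => ?_⟩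
  have h1 : x ⬝ᵥ x = 1 := hsub hx
  rw [pi_norm_le_iff_of_nonneg zero_le_one]
  intro i
  rw [Real.norm_eq_abs, abs_le_one_iff_mul_self_le_one]
  calc x i * x i ≤ ∑ j, x j * x j :=
        Finset.single_le_sum (fun j _ => mul_self_nonneg (x j)) (Finset.mem_univ i)
    _ = 1 := h1

lemma exists_unit {x : n → ℝ} (hx : x ≠ 0) :
    ∃ u : n → ℝ, u ⬝ᵥ u = 1 ∧
      ∀ B : Matrix n n ℝ, u ⬝ᵥ (B *ᵥ u) = (x ⬝ᵥ x)⁻¹ * (x ⬝ᵥ (B *ᵥ x)) := by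
  have ht : 0 < x ⬝ᵥ x := dot_self_pos hx
  set c : ℝ := (Real.sqrt (x ⬝ᵥ x))⁻¹ with hcdef
  have hc2 : c^2 = (x ⬝ᵥ x)⁻¹ := by
    rw [hcdef, ← Real.sqrt_inv, Real.sq_sqrt (by positivity)]
  refine ⟨c • x, ?_, fun B => ?_⟩
  · rw [smul_dotProduct, dotProduct_smul, smul_eq_mul, smul_eq_mul, ← mul_assoc, ← pow_two, hc2]
    exact inv_mul_cancel₀ ht.ne'
  · rw [smul_dotProduct, mulVec_smul, dotProduct_smul, smul_eq_mul, smul_eq_mul, ← mul_assoc,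
      ← pow_two, hc2]

variable {n : Type*} [Fintype n] [DecidableEq n]

lemma qf_sub_smul (A N : Matrix n n ℝ) (α : ℝ) (v : n → ℝ) :
    v ⬝ᵥ ((A - α • N) *ᵥ v) = v ⬝ᵥ (A *ᵥ v) - α * (v ⬝ᵥ (N *ᵥ v)) := by
  rw [sub_mulVec, dotProduct_sub, smul_mulVec, dotProduct_smul, smul_eq_mul]

lemma herm_sub_smul {A N : Matrix n n ℝ} (hA : Aᵀ = A) (hN : Nᵀ = N) (α : ℝ) :
    (A - α • N).IsHermitian := by
  rw [Matrix.IsHermitian, conjTranspose_eq_transpose_of_trivial, transpose_sub,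
    transpose_smul, hA, hN]

lemma unit_ne_zero {v : n → ℝ} (hv : v ⬝ᵥ v = 1) : v ≠ 0 := by
  intro h
  rw [h] at hv
  simp at hv

lemma main_pointwise (A N : Matrix n n ℝ) (hA : Aᵀ = A) (hN : Nᵀ = N)
    (H : ∀ v : n → ℝ, v ≠ 0 → 0 ≤ v ⬝ᵥ (N *ᵥ v) → 0 < v ⬝ᵥ (A *ᵥ v)) :
    ∃ α : ℝ, 0 ≤ α ∧ (A - α • N).PosDef := by
  have hcont1 : Continuous fun v : n → ℝ => v ⬝ᵥ v := by
    have := cont_qf (1 : Matrix n n ℝ)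
    simpa [one_mulVec] using this
  have hnonzero : ∀ v : n → ℝ, 0 < v ⬝ᵥ (N *ᵥ v) → v ≠ 0 := by
    intro v hv h0
    rw [h0] at hv
    simp at hv
  by_cases hslater : ∃ v : n → ℝ, 0 < v ⬝ᵥ (N *ᵥ v)
  · -- Slater case
    set K : Set (n → ℝ) := {v | v ⬝ᵥ v = 1 ∧ 0 ≤ v ⬝ᵥ (N *ᵥ v)} with hK
    have hKclosed : IsClosed K :=
      (isClosed_eq hcont1 continuous_const).inter (isClosed_le continuous_const (cont_qf N))
    have hKcomp : IsCompact K := compact_in_sphere hKclosed fun v hv => hv.1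
    have hKne : K.Nonempty := by
      obtain ⟨v, hv⟩ := hslater
      obtain ⟨u, hu1, hu2⟩ := exists_unit (hnonzero v hv)
      refine ⟨u, hu1, ?_⟩
      rw [hu2 N]
      have := dot_self_pos (hnonzero v hv)
      positivity
    obtain ⟨v₁, hv₁K, hv₁min⟩ := hKcomp.exists_isMinOn hKne (cont_qf A).continuousOn
    set m := v₁ ⬝ᵥ (A *ᵥ v₁) with hm
    have hmpos : 0 < m := H v₁ (unit_ne_zero hv₁K.1) hv₁K.2
    have hmmin : ∀ v ∈ K, m ≤ v ⬝ᵥ (A *ᵥ v) := fun v hv => hv₁min hv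
    set A' : Matrix n n ℝ := A - (m/2) • (1 : Matrix n n ℝ) with hA'
    have hA'symm : A'ᵀ = A' := by
      rw [hA', transpose_sub, transpose_smul, transpose_one, hA]
    have hqfA' : ∀ v : n → ℝ, v ⬝ᵥ (A' *ᵥ v) = v ⬝ᵥ (A *ᵥ v) - (m/2) * (v ⬝ᵥ v) := by
      intro v
      rw [hA', qf_sub_smul, one_mulVec]
    have hpos' : ∀ v : n → ℝ, 0 < v ⬝ᵥ (N *ᵥ v) → 0 < v ⬝ᵥ (A' *ᵥ v) := by
      intro v hv
      have hv0 : v ≠ 0 := hnonzero v hv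
      have ht : 0 < v ⬝ᵥ v := dot_self_pos hv0
      obtain ⟨u, hu1, hu2⟩ := exists_unit hv0
      have huK : u ∈ K := by
        refine ⟨hu1, ?_⟩
        rw [hu2 N]
        positivity
      have h1 : m ≤ (v ⬝ᵥ v)⁻¹ * (v ⬝ᵥ (A *ᵥ v)) := by
        have := hmmin u huK
        rwa [hu2 A] at this
      have h2 : m * (v ⬝ᵥ v) ≤ v ⬝ᵥ (A *ᵥ v) := by
        have := mul_le_mul_of_nonneg_right h1 ht.le
        rwa [mul_comm ((v ⬝ᵥ v)⁻¹) _, mul_assoc, inv_mul_cancel₀ ht.ne', mul_one] at this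
      rw [hqfA' v]
      nlinarith
    obtain ⟨α, hα0, hαall⟩ := slemma_sep A' N hA'symm hN hpos' hslater
    refine ⟨α, hα0, posdef_of_sphere _ (herm_sub_smul hA hN α) ?_⟩
    intro v hv1
    rw [qf_sub_smul]
    have := hαall v
    rw [hqfA' v, hv1, mul_one] at this
    linarith
  · -- no Slater: N ⪯ 0
    push_neg at hslater
    set K : Set (n → ℝ) := {v | v ⬝ᵥ v = 1} with hK
    set A₀ : Set (n → ℝ) := {v | v ⬝ᵥ v = 1 ∧ v ⬝ᵥ (A *ᵥ v) ≤ 0} with hA₀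
    have hA₀closed : IsClosed A₀ :=
      (isClosed_eq hcont1 continuous_const).inter (isClosed_le (cont_qf A) continuous_const)
    have hA₀comp : IsCompact A₀ := compact_in_sphere hA₀closed fun v hv => hv.1
    rcases A₀.eq_empty_or_nonempty with hA₀e | hA₀ne
    · refine ⟨0, le_refl 0, posdef_of_sphere _ (herm_sub_smul hA hN 0) ?_⟩
      intro v hv1
      rw [qf_sub_smul, zero_mul, sub_zero]
      by_contra hcon
      push_neg at hcon
      have : v ∈ A₀ := ⟨hv1, hcon⟩
      rw [hA₀e] at this
      exact this
    · have hcontNeg : Continuous fun v : n → ℝ => -(v ⬝ᵥ (N *ᵥ v)) := (cont_qf N).neg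
      obtain ⟨w, hwA₀, hwmin⟩ := hA₀comp.exists_isMinOn hA₀ne hcontNeg.continuousOn
      set δ := -(w ⬝ᵥ (N *ᵥ w)) with hδ
      have hδpos : 0 < δ := by
        rw [hδ, neg_pos]
        rcases lt_or_eq_of_le (hslater w) with h | h
        · exact h
        · exfalso
          have := H w (unit_ne_zero hwA₀.1) (le_of_eq h.symm)
          linarith [hwA₀.2]
      have hKclosed : IsClosed K := isClosed_eq hcont1 continuous_const
      have hKcomp : IsCompact K := compact_in_sphere hKclosed fun v hv => hv
      have hKne : K.Nonempty := ⟨w, hwA₀.1⟩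
      obtain ⟨z, hzK, hzmin⟩ := hKcomp.exists_isMinOn hKne (cont_qf A).continuousOn
      set m₀ := z ⬝ᵥ (A *ᵥ z) with hm₀
      have hm₀le : m₀ ≤ 0 := le_trans (hzmin hwA₀.1) hwA₀.2
      set α := (1 - m₀)/δ with hα
      have hαpos : 0 < α := by
        apply div_pos
        · linarith
        · exact hδpos
      refine ⟨α, hαpos.le, posdef_of_sphere _ (herm_sub_smul hA hN α) ?_⟩
      intro v hv1
      rw [qf_sub_smul]
      rcases le_or_gt (v ⬝ᵥ (A *ᵥ v)) 0 with hvA | hvA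
      · have hvA₀ : v ∈ A₀ := ⟨hv1, hvA⟩
        have h1 : δ ≤ -(v ⬝ᵥ (N *ᵥ v)) := hwmin hvA₀
        have h2 : m₀ ≤ v ⬝ᵥ (A *ᵥ v) := hzmin hv1
        have h3 : α * δ = 1 - m₀ := by
          rw [hα, div_mul_cancel₀ _ hδpos.ne']
        nlinarith
      · have h1 : v ⬝ᵥ (N *ᵥ v) ≤ 0 := hslater v
        nlinarith

section basic
variable {q r : ℕ}

lemma qmi_eq (P : Matrix (Fin q ⊕ Fin r) (Fin q ⊕ Fin r) ℝ) (Z : Matrix (Fin r) (Fin q) ℝ) :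
    qmi P Z = @HMul.hMul _ _ _ Matrix.instHMulOfFintypeOfMulOfAddCommMonoid
      ((fromRows (1 : Matrix (Fin q) (Fin q) ℝ) Z)ᵀ * P) (fromRows 1 Z) :=
  rfl

lemma dot_transpose_mulVec {m n : Type*} [Fintype m] [Fintype n]
    (A : Matrix m n ℝ) (x : n → ℝ) (y : m → ℝ) :
    x ⬝ᵥ (Aᵀ *ᵥ y) = (A *ᵥ x) ⬝ᵥ y := by
  rw [dotProduct_mulVec, vecMul_transpose]

lemma qf_qmi (P : Matrix (Fin q ⊕ Fin r) (Fin q ⊕ Fin r) ℝ) (Z : Matrix (Fin r) (Fin q) ℝ)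
    (x : Fin q → ℝ) :
    x ⬝ᵥ (qmi P Z *ᵥ x) = (fromRows 1 Z *ᵥ x) ⬝ᵥ (P *ᵥ (fromRows 1 Z *ᵥ x)) := by
  rw [qmi_eq, Matrix.mul_assoc, ← mulVec_mulVec, dot_transpose_mulVec, mulVec_mulVec]

lemma fromRows_one_mulVec (Z : Matrix (Fin r) (Fin q) ℝ) (x : Fin q → ℝ) :
    fromRows (1 : Matrix (Fin q) (Fin q) ℝ) Z *ᵥ x = Sum.elim x (Z *ᵥ x) := by
  rw [fromRows_mulVec, one_mulVec]

lemma qmi_blocks (P : Matrix (Fin q ⊕ Fin r) (Fin q ⊕ Fin r) ℝ) (Z : Matrix (Fin r) (Fin q) ℝ) :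
    qmi P Z = P.toBlocks₁₁ + P.toBlocks₁₂ * Z + Zᵀ * P.toBlocks₂₁ + Zᵀ * (P.toBlocks₂₂ * Z) := by
  have h : P = fromBlocks P.toBlocks₁₁ P.toBlocks₁₂ P.toBlocks₂₁ P.toBlocks₂₂ :=
    (fromBlocks_toBlocks P).symm
  rw [qmi_eq, transpose_fromRows, Matrix.mul_assoc]
  nth_rewrite 1 [h]
  rw [fromBlocks_mul_fromRows, fromCols_mul_fromRows]
  simp [Matrix.mul_add, Matrix.mul_assoc, transpose_one]
  abel

end basic

section construct
variable {q r : ℕ} (N : Matrix (Fin q ⊕ Fin r) (Fin q ⊕ Fin r) ℝ)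

lemma blocks_symm11 (hN : Nᵀ = N) : (N.toBlocks₁₁)ᵀ = N.toBlocks₁₁ := by
  ext i j
  exact (congrFun (congrFun hN (Sum.inl i)) (Sum.inl j))

lemma blocks_symm22 (hN : Nᵀ = N) : (N.toBlocks₂₂)ᵀ = N.toBlocks₂₂ := by
  ext i j
  exact (congrFun (congrFun hN (Sum.inr i)) (Sum.inr j))

lemma blocks_symm12 (hN : Nᵀ = N) : (N.toBlocks₁₂)ᵀ = N.toBlocks₂₁ := by
  ext i j
  exact (congrFun (congrFun hN (Sum.inr i)) (Sum.inl j))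

lemma qmi_isHermitian (hN : Nᵀ = N) (Z : Matrix (Fin r) (Fin q) ℝ) :
    (qmi N Z).IsHermitian := by
  rw [Matrix.IsHermitian, conjTranspose_eq_transpose_of_trivial, qmi_eq, transpose_mul,
    transpose_mul, transpose_transpose, hN, Matrix.mul_assoc]

lemma qf_sum_elim (v₁ : Fin q → ℝ) (v₂ : Fin r → ℝ) :
    Sum.elim v₁ v₂ ⬝ᵥ (N *ᵥ Sum.elim v₁ v₂) =
      v₁ ⬝ᵥ (N.toBlocks₁₁ *ᵥ v₁) + v₁ ⬝ᵥ (N.toBlocks₁₂ *ᵥ v₂) +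
      (v₂ ⬝ᵥ (N.toBlocks₂₁ *ᵥ v₁) + v₂ ⬝ᵥ (N.toBlocks₂₂ *ᵥ v₂)) := by
  have h : N = fromBlocks N.toBlocks₁₁ N.toBlocks₁₂ N.toBlocks₂₁ N.toBlocks₂₂ :=
    (fromBlocks_toBlocks N).symm
  nth_rewrite 1 [h]
  rw [fromBlocks_mulVec, sumElim_dotProduct_sumElim, dotProduct_add, dotProduct_add]
  simp

end construct

section schur
variable {q r : ℕ}

lemma schur_expand (A₁ : Matrix (Fin q) (Fin q) ℝ) (B : Matrix (Fin q) (Fin r) ℝ)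
    (C : Matrix (Fin r) (Fin q) ℝ) (D : Matrix (Fin r) (Fin r) ℝ) (Z : Matrix (Fin r) (Fin q) ℝ)
    (hDsym : Dᵀ = D) (hCB : Cᵀ = B) (hdet : IsUnit D.det) :
    A₁ + B * Z + Zᵀ * C + Zᵀ * (D * Z) =
      (A₁ - B * D⁻¹ * C) + (Z - -(D⁻¹ * C))ᵀ * (D * (Z - -(D⁻¹ * C))) := by
  have hDinvT : (D⁻¹)ᵀ = D⁻¹ := by rw [transpose_nonsing_inv, hDsym]
  have hDZc : D * -(D⁻¹ * C) = -C := by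
    rw [Matrix.mul_neg, ← Matrix.mul_assoc, mul_nonsing_inv _ hdet, Matrix.one_mul]
  have hZcT : (-(D⁻¹ * C))ᵀ = -(B * D⁻¹) := by
    rw [transpose_neg, transpose_mul, hDinvT, hCB]
  have e2 : B * D⁻¹ * (D * Z) = B * Z := by
    rw [Matrix.mul_assoc B, ← Matrix.mul_assoc D⁻¹, nonsing_inv_mul _ hdet, Matrix.one_mul]
  have e1 : (Z - -(D⁻¹ * C))ᵀ * (D * (Z - -(D⁻¹ * C))) =
      Zᵀ * (D * Z) + Zᵀ * C + B * Z + B * D⁻¹ * C := by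
    rw [Matrix.mul_sub, hDZc, transpose_sub, hZcT, Matrix.sub_mul, Matrix.mul_sub, Matrix.mul_sub]
    simp only [Matrix.neg_mul, Matrix.mul_neg, neg_neg, sub_neg_eq_add]
    rw [e2]
    abel
  rw [e1]
  abel

/-- Completion of squares identity for the QMI. -/
lemma qmi_schur (N : Matrix (Fin q ⊕ Fin r) (Fin q ⊕ Fin r) ℝ) (hN : Nᵀ = N)
    (hdet : IsUnit N.toBlocks₂₂.det) (Z : Matrix (Fin r) (Fin q) ℝ) :
    qmi N Z = (N.toBlocks₁₁ - N.toBlocks₁₂ * N.toBlocks₂₂⁻¹ * N.toBlocks₂₁) +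
      (Z - (-(N.toBlocks₂₂⁻¹ * N.toBlocks₂₁)))ᵀ *
        (N.toBlocks₂₂ * (Z - (-(N.toBlocks₂₂⁻¹ * N.toBlocks₂₁)))) := by
  rw [qmi_blocks]
  exact schur_expand _ _ _ _ Z (blocks_symm22 N hN)
    (by rw [← blocks_symm12 N hN, transpose_transpose]) hdet
end schur

section cs
variable {n : Type*} [Fintype n]

/-- Cauchy–Schwarz for a PSD form. -/
lemma psd_cauchy_schwarz (S : Matrix n n ℝ) (hSsym : Sᵀ = S)
    (hS : ∀ z : n → ℝ, 0 ≤ z ⬝ᵥ (S *ᵥ z)) (x y : n → ℝ) :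
    (x ⬝ᵥ (S *ᵥ y))^2 ≤ (x ⬝ᵥ (S *ᵥ x)) * (y ⬝ᵥ (S *ᵥ y)) := by
  have key : ∀ t : ℝ, 0 ≤ (y ⬝ᵥ (S *ᵥ y)) * (t*t) + (2 * (x ⬝ᵥ (S *ᵥ y))) * t
      + (x ⬝ᵥ (S *ᵥ x)) := by
    intro t
    have h := hS ((1:ℝ) • x + t • y)
    rw [qf_expand S hSsym x y 1 t] at h
    nlinarith [h]
  have hd := discrim_le_zero key
  rw [discrim] at hd
  nlinarith [hd]
end cs

lemma vecMulVec_mulVec {q r : ℕ} (w : Fin r → ℝ) (u x : Fin q → ℝ) :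
    (vecMulVec w u) *ᵥ x = (u ⬝ᵥ x) • w := by
  ext i
  simp only [mulVec, dotProduct, vecMulVec_apply, Pi.smul_apply, smul_eq_mul, Finset.sum_mul]
  apply Finset.sum_congr rfl
  intros
  ring

section construct
variable {q r : ℕ}

/-- Construction of a solution `Z` of the QMI through a given point. -/
lemma exists_Z (N : Matrix (Fin q ⊕ Fin r) (Fin q ⊕ Fin r) ℝ) (hN : Nᵀ = N)
    (hdet : IsUnit N.toBlocks₂₂.det)
    (hG : ∀ z : Fin r → ℝ, z ≠ 0 → z ⬝ᵥ (N.toBlocks₂₂ *ᵥ z) < 0)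
    (hSsym : (N.toBlocks₁₁ - N.toBlocks₁₂ * N.toBlocks₂₂⁻¹ * N.toBlocks₂₁)ᵀ
      = N.toBlocks₁₁ - N.toBlocks₁₂ * N.toBlocks₂₂⁻¹ * N.toBlocks₂₁)
    (hS : ∀ z : Fin q → ℝ,
      0 ≤ z ⬝ᵥ ((N.toBlocks₁₁ - N.toBlocks₁₂ * N.toBlocks₂₂⁻¹ * N.toBlocks₂₁) *ᵥ z))
    (v₁ : Fin q → ℝ) (v₂ : Fin r → ℝ) (hv₁ : v₁ ≠ 0)
    (hvN : 0 ≤ (Sum.elim v₁ v₂) ⬝ᵥ (N *ᵥ Sum.elim v₁ v₂)) :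
    ∃ Z : Matrix (Fin r) (Fin q) ℝ, (∀ x : Fin q → ℝ, 0 ≤ x ⬝ᵥ (qmi N Z *ᵥ x)) ∧
      Z *ᵥ v₁ = v₂ := by
  set S := N.toBlocks₁₁ - N.toBlocks₁₂ * N.toBlocks₂₂⁻¹ * N.toBlocks₂₁ with hSdef
  set D := N.toBlocks₂₂ with hDdef
  set Zc : Matrix (Fin r) (Fin q) ℝ := -(N.toBlocks₂₂⁻¹ * N.toBlocks₂₁) with hZc
  -- scalar form of the Schur identity
  have qf_split : ∀ (Y : Matrix (Fin r) (Fin q) ℝ) (x : Fin q → ℝ),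
      x ⬝ᵥ (qmi N (Zc + Y) *ᵥ x) = x ⬝ᵥ (S *ᵥ x) + (Y *ᵥ x) ⬝ᵥ (D *ᵥ (Y *ᵥ x)) := by
    intro Y x
    have h := qmi_schur N hN hdet (Zc + Y)
    rw [add_sub_cancel_left] at h
    rw [h, add_mulVec, dotProduct_add, ← mulVec_mulVec, dot_transpose_mulVec, mulVec_mulVec,
      ← mulVec_mulVec]
  set w : Fin r → ℝ := v₂ - Zc *ᵥ v₁ with hw
  have hZY : ∀ Y : Matrix (Fin r) (Fin q) ℝ, Y *ᵥ v₁ = w → (Zc + Y) *ᵥ v₁ = v₂ := by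
    intro Y hY
    rw [add_mulVec, hY, hw]
    abel
  have hvrep : ∀ Y : Matrix (Fin r) (Fin q) ℝ, Y *ᵥ v₁ = w →
      Sum.elim v₁ v₂ = fromRows 1 (Zc + Y) *ᵥ v₁ := by
    intro Y hY
    rw [fromRows_one_mulVec, hZY Y hY]
  -- step 1: derive w ⬝ᵥ D w ≥ -c where c is the Schur form value
  set c := v₁ ⬝ᵥ (S *ᵥ v₁) with hc
  have hcnn : 0 ≤ c := hS v₁
  have hwD : 0 ≤ c + w ⬝ᵥ (D *ᵥ w) := by
    set Y₀ : Matrix (Fin r) (Fin q) ℝ := (v₁ ⬝ᵥ v₁)⁻¹ • vecMulVec w v₁ with hY₀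
    have ht : 0 < v₁ ⬝ᵥ v₁ := dot_self_pos hv₁
    have hY₀v : Y₀ *ᵥ v₁ = w := by
      rw [hY₀, smul_mulVec, vecMulVec_mulVec, smul_smul, inv_mul_cancel₀ ht.ne', one_smul]
    have h1 := hvN
    rw [hvrep Y₀ hY₀v, ← qf_qmi, qf_split Y₀ v₁, hY₀v] at h1
    exact h1
  rcases eq_or_lt_of_le hcnn with hc0 | hcpos
  · -- c = 0 : w must vanish
    have hw0 : w = 0 := by
      by_contra hwne
      have := hG w hwne
      rw [← hc0] at hwD
      linarith
    refine ⟨Zc, fun x => ?_, ?_⟩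
    · have h := qf_split 0 x
      rw [add_zero] at h
      rw [h]
      simp only [zero_mulVec, dotProduct_zero, zero_dotProduct]
      simpa using hS x
    · rw [hw] at hw0
      exact (sub_eq_zero.mp hw0).symm
  · -- c > 0
    set Y : Matrix (Fin r) (Fin q) ℝ := c⁻¹ • vecMulVec w (S *ᵥ v₁) with hY
    have hYv : Y *ᵥ v₁ = w := by
      rw [hY, smul_mulVec, vecMulVec_mulVec, smul_smul, dotProduct_comm, ← hc,
        inv_mul_cancel₀ hcpos.ne', one_smul]
    refine ⟨Zc + Y, fun x => ?_, hZY Y hYv⟩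
    rw [qf_split Y x]
    have hYx : Y *ᵥ x = (c⁻¹ * ((S *ᵥ v₁) ⬝ᵥ x)) • w := by
      rw [hY, smul_mulVec, vecMulVec_mulVec, smul_smul]
    set μ := c⁻¹ * ((S *ᵥ v₁) ⬝ᵥ x) with hμ
    have hq : (Y *ᵥ x) ⬝ᵥ (D *ᵥ (Y *ᵥ x)) = μ^2 * (w ⬝ᵥ (D *ᵥ w)) := by
      rw [hYx, smul_dotProduct, mulVec_smul, dotProduct_smul, smul_eq_mul, smul_eq_mul]
      ring
    rw [hq]
    have hCS := psd_cauchy_schwarz S hSsym hS x v₁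
    have hdot : (S *ᵥ v₁) ⬝ᵥ x = x ⬝ᵥ (S *ᵥ v₁) := dotProduct_comm _ _
    have hwDc : w ⬝ᵥ (D *ᵥ w) ≥ -c := by linarith
    have hμ2 : μ^2 * (w ⬝ᵥ (D *ᵥ w)) ≥ -(μ^2 * c) := by nlinarith [sq_nonneg μ]
    have hμc : μ^2 * c = (x ⬝ᵥ (S *ᵥ v₁))^2 / c := by
      rw [hμ, hdot]
      field_simp
    have hfin : (x ⬝ᵥ (S *ᵥ v₁))^2 / c ≤ x ⬝ᵥ (S *ᵥ x) := by
      rw [div_le_iff₀ hcpos]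
      calc (x ⬝ᵥ (S *ᵥ v₁))^2 ≤ (x ⬝ᵥ (S *ᵥ x)) * (v₁ ⬝ᵥ (S *ᵥ v₁)) := hCS
        _ = x ⬝ᵥ (S *ᵥ x) * c := by rw [hc]
    linarith [hμ2, hμc ▸ hμ2]
end construct

lemma rstar {k : Type*} (x : k → ℝ) : star x = x :=
  funext fun i => star_trivial (x i)

end AuxSLemma

/-- Strict matrix S-lemma: If `M − αN ≻ 0` for some `α ≥ 0`, then
`Z_r(N) ⊆ Z_r⁺(M)`. Conversely, if moreover `N ∈ Π_{q,r}` and `N₂₂ ≺ 0`, then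
`Z_r(N) ⊆ Z_r⁺(M)` iff such an `α ≥ 0` exists. -/
theorem stmt_15 {q r : ℕ} (M N : Matrix (Fin q ⊕ Fin r) (Fin q ⊕ Fin r) ℝ)
    (hM : M.IsSymm) (hN : N.IsSymm) :
    ((∃ α : ℝ, 0 ≤ α ∧ (M - α • N).PosDef) → ZrSet N ⊆ ZrPlusSet M) ∧
    ((memPi N ∧ (-N.toBlocks₂₂).PosDef) →
      (ZrSet N ⊆ ZrPlusSet M ↔ ∃ α : ℝ, 0 ≤ α ∧ (M - α • N).PosDef)) := by
  have hMt : Mᵀ = M := hM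
  have hNt : Nᵀ = N := hN
  -- Part A : sufficiency
  have partA : (∃ α : ℝ, 0 ≤ α ∧ (M - α • N).PosDef) → ZrSet N ⊆ ZrPlusSet M := by
    rintro ⟨α, hα, hPD⟩ Z hZ
    have hZpsd : (qmi N Z).PosSemidef := hZ
    refine Matrix.PosDef.of_dotProduct_mulVec_pos (qmi_isHermitian M hMt Z) (fun x hx => ?_)
    rw [rstar x]
    have hLx : fromRows (1 : Matrix (Fin q) (Fin q) ℝ) Z *ᵥ x = Sum.elim x (Z *ᵥ x) :=
      fromRows_one_mulVec Z x
    have hLne : fromRows (1 : Matrix (Fin q) (Fin q) ℝ) Z *ᵥ x ≠ 0 := by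
      rw [hLx]
      intro h
      apply hx
      funext i
      exact congrFun h (Sum.inl i)
    have h1 := hPD.dotProduct_mulVec_pos hLne
    rw [rstar _] at h1
    rw [qf_sub_smul] at h1
    have h2 := hZpsd.dotProduct_mulVec_nonneg x
    rw [rstar x, qf_qmi] at h2
    rw [qf_qmi]
    nlinarith [mul_nonneg hα h2]
  refine ⟨partA, fun ⟨hmem, hND⟩ => ⟨?_, partA⟩⟩
  intro hsub
  obtain ⟨hNsym, hN22psd, hschur, hker⟩ := hmem
  -- N₂₂ is invertible
  have hdet : IsUnit N.toBlocks₂₂.det := by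
    have h1 : (0:ℝ) < (-N.toBlocks₂₂).det := hND.det_pos
    rw [det_neg] at h1
    have h2 : N.toBlocks₂₂.det ≠ 0 := by
      intro h
      rw [h, mul_zero] at h1
      exact lt_irrefl 0 h1
    exact isUnit_iff_ne_zero.mpr h2
  have hG : ∀ z : Fin r → ℝ, z ≠ 0 → z ⬝ᵥ (N.toBlocks₂₂ *ᵥ z) < 0 := by
    intro z hz
    have := hND.dotProduct_mulVec_pos hz
    rw [rstar z, neg_mulVec, dotProduct_neg] at this
    linarith
  have hpinv : pinv N.toBlocks₂₂ = N.toBlocks₂₂⁻¹ := pinv_of_invertible _ hdet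
  rw [schurC, hpinv] at hschur
  have hSsym : (N.toBlocks₁₁ - N.toBlocks₁₂ * N.toBlocks₂₂⁻¹ * N.toBlocks₂₁)ᵀ
      = N.toBlocks₁₁ - N.toBlocks₁₂ * N.toBlocks₂₂⁻¹ * N.toBlocks₂₁ := by
    have h := hschur.1
    rwa [Matrix.IsHermitian, conjTranspose_eq_transpose_of_trivial] at h
  have hSqf : ∀ z : Fin q → ℝ,
      0 ≤ z ⬝ᵥ ((N.toBlocks₁₁ - N.toBlocks₁₂ * N.toBlocks₂₂⁻¹ * N.toBlocks₂₁) *ᵥ z) := by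
    intro z
    have := hschur.dotProduct_mulVec_nonneg z
    rwa [rstar z] at this
  -- pointwise positivity hypothesis
  have H : ∀ v : (Fin q ⊕ Fin r) → ℝ, v ≠ 0 → 0 ≤ v ⬝ᵥ (N *ᵥ v) → 0 < v ⬝ᵥ (M *ᵥ v) := by
    intro v hv0 hvN
    have hv : v = Sum.elim (v ∘ Sum.inl) (v ∘ Sum.inr) := by
      funext i
      cases i <;> rfl
    by_cases hv₁ : (v ∘ Sum.inl) = 0
    · exfalso
      have hv₂ : (v ∘ Sum.inr) ≠ 0 := by
        intro h
        apply hv0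
        funext i
        cases i with
        | inl i => exact congrFun hv₁ i
        | inr i => exact congrFun h i
      rw [hv, qf_sum_elim, hv₁] at hvN
      simp only [mulVec_zero, dotProduct_zero, zero_dotProduct, zero_add, add_zero] at hvN
      have := hG _ hv₂
      linarith
    · obtain ⟨Z, hZpsd, hZv⟩ := exists_Z N hNt hdet hG hSsym hSqf
        (v ∘ Sum.inl) (v ∘ Sum.inr) hv₁ (by rw [← hv]; exact hvN)
      have hZmem : Z ∈ ZrSet N := by
        refine Matrix.PosSemidef.of_dotProduct_mulVec_nonneg (qmi_isHermitian N hNt Z) (fun x => ?_)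
        rw [rstar x]
        exact hZpsd x
      have hMZ : (qmi M Z).PosDef := hsub hZmem
      have h1 := hMZ.dotProduct_mulVec_pos hv₁
      rw [rstar _, qf_qmi, fromRows_one_mulVec, hZv, ← hv] at h1
      exact h1
  exact main_pointwise M N hMt hNt H
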